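/- Consider the continuous-time Markov chain (I(t)) on {0,1,…,n} with jump rates: from state x, up by 1 at rate λ_L·x·(1 − x/n) and down by 1 at rate γ·x (so 0 is absorbing). Let ψ(n,x) satisfy ψ(n,n)=1 and ψ(n,x) = 1 + (λ_L/γ)(1 − x/n)ψ(n,x+1) for 1 ≤ x ≤ n−1, and define φ by φ(n,0)=0 and φ(n,x) = φ(n,x−1) − ψ(n,x)/γ. Then the generator L of the chain applied to φ(n,·) satisfies (Lφ)(x) = x for all 0 ≤ x ≤ n. -/

import Mathlib

theorem stmt_10 (n : ℕ) (hn : 1 ≤ n) (lamL gam : ℝ) (hL : 0 < lamL) (hg : 0 < gam)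
    (ψ φ : ℕ → ℕ → ℝ)
    (hψn : ψ n n = 1)
    (hψ : ∀ x : ℕ, 1 ≤ x → x ≤ n - 1 →
      ψ n x = 1 + (lamL / gam) * (1 - (x : ℝ) / n) * ψ n (x + 1))
    (hφ0 : φ n 0 = 0)
    (hφ : ∀ x : ℕ, 1 ≤ x → x ≤ n → φ n x = φ n (x - 1) - ψ n x / gam) :
    ∀ x : ℕ, x ≤ n →
      lamL * x * (1 - (x : ℝ) / n) * (φ n (x + 1) - φ n x) +
        gam * x * (φ n (x - 1) - φ n x) = (x : ℝ) := by
  intro x hx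
  have hn0 : (n : ℝ) ≠ 0 := Nat.cast_ne_zero.mpr (by omega)
  have hg0 : gam ≠ 0 := ne_of_gt hg
  rcases Nat.eq_zero_or_pos x with h0 | hx1
  · subst h0; simp
  rcases eq_or_lt_of_le hx with hxn | hxlt
  · -- x = n
    have h1 : (1 - (x : ℝ) / n) = 0 := by
      rw [hxn]; field_simp; ring
    rw [h1]
    have := hφ x hx1 (le_of_eq hxn)
    rw [this]
    rw [hxn, hψn]
    field_simp
    ring
  · -- x < n
    have hle : x ≤ n - 1 := by omega
    have e1 : φ n (x + 1) = φ n x - ψ n (x + 1) / gam := by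
      have := hφ (x + 1) (by omega) (by omega)
      simpa using this
    have e2 : φ n x = φ n (x - 1) - ψ n x / gam := hφ x hx1 hx
    have e3 : ψ n x = 1 + (lamL / gam) * (1 - (x : ℝ) / n) * ψ n (x + 1) :=
      hψ x hx1 hle
    rw [e1, e2, e3]
    field_simp
    ring
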